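/- One forward-Euler step of the upwind-with-minmod advection-diffusion scheme preserves nonnegativity of the cell averages: if all f_{i,j}^k ≥ 0 and the time step satisfies, for some θ ∈ (0,1), Δt · max(2a/(θΔx), 2b/(θΔy), (1/(2(1−θ)))(c/Δx² + d/Δy²)) ≤ 1 with a = sup|u_{i+1,j}^k + u_{i,j}^k|, b = sup|z_{i,j+1}^k + z_{i,j}^k|, c = sup(D_{i+1,j}^k + 2D_{i,j}^k + D_{i−1,j}^k), d = sup(D_{i,j+1}^k + 2D_{i,j}^k + D_{i,j−1}^k), then all updated values f_{i,j}^{k+1} ≥ 0. -/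

import Mathlib

/-- The minmod limiter of three slopes. -/
noncomputable def minmod3 (a b c : ℝ) : ℝ :=
  if 0 < a ∧ 0 < b ∧ 0 < c then min a (min b c)
  else if a < 0 ∧ b < 0 ∧ c < 0 then max a (max b c)
  else 0

/-- Minmod slope in the `x`-direction in cell `(i,j)`. -/
noncomputable def sigmaX (f : ℤ → ℤ → ℝ) (i j : ℤ) : ℝ :=
  minmod3 (2 * (f (i + 1) j - f i j)) ((f (i + 1) j - f (i - 1) j) / 2)
    (2 * (f i j - f (i - 1) j))

/-- Minmod slope in the `y`-direction in cell `(i,j)`. -/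
noncomputable def sigmaY (f : ℤ → ℤ → ℝ) (i j : ℤ) : ℝ :=
  minmod3 (2 * (f i (j + 1) - f i j)) ((f i (j + 1) - f i (j - 1)) / 2)
    (2 * (f i j - f i (j - 1)))

/-- Upwind advective flux `F_{i+1/2,j}` with minmod-reconstructed interface values. -/
noncomputable def fluxF (f u : ℤ → ℤ → ℝ) (i j : ℤ) : ℝ :=
  max 0 ((u i j + u (i + 1) j) / 2) * (f i j + sigmaX f i j / 2) +
  min 0 ((u i j + u (i + 1) j) / 2) * (f (i + 1) j - sigmaX f (i + 1) j / 2)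

/-- Upwind advective flux `G_{i,j+1/2}`. -/
noncomputable def fluxG (f z : ℤ → ℤ → ℝ) (i j : ℤ) : ℝ :=
  max 0 ((z i j + z i (j + 1)) / 2) * (f i j + sigmaY f i j / 2) +
  min 0 ((z i j + z i (j + 1)) / 2) * (f i (j + 1) - sigmaY f i (j + 1) / 2)

/-- Diffusive flux `H_{i+1/2,j} = (1/(2Δx))(D_{i+1,j} + D_{i,j})(f_{i+1,j} − f_{i,j})`. -/
noncomputable def fluxH (f D : ℤ → ℤ → ℝ) (Δx : ℝ) (i j : ℤ) : ℝ :=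
  (1 / (2 * Δx)) * (D (i + 1) j + D i j) * (f (i + 1) j - f i j)

/-- Diffusive flux `M_{i,j+1/2}`. -/
noncomputable def fluxM (f D : ℤ → ℤ → ℝ) (Δy : ℝ) (i j : ℤ) : ℝ :=
  (1 / (2 * Δy)) * (D i (j + 1) + D i j) * (f i (j + 1) - f i j)

/-- One forward-Euler step of the upwind/minmod advection–diffusion scheme. -/
noncomputable def eulerStep (f u z D : ℤ → ℤ → ℝ) (Δx Δy Δt : ℝ) (i j : ℤ) : ℝ :=
  f i j
    - Δt / Δx * (fluxF f u i j - fluxF f u (i - 1) j)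
    - Δt / Δy * (fluxG f z i j - fluxG f z i (j - 1))
    + Δt / Δx * (fluxH f D Δx i j - fluxH f D Δx (i - 1) j)
    + Δt / Δy * (fluxM f D Δy i j - fluxM f D Δy i (j - 1))

lemma slope_lower (x m y : ℝ) (hx : 0 ≤ x) (hm : 0 ≤ m) (hy : 0 ≤ y) :
    0 ≤ m + minmod3 (2 * (y - m)) ((y - x) / 2) (2 * (m - x)) / 2 ∧
    0 ≤ m - minmod3 (2 * (y - m)) ((y - x) / 2) (2 * (m - x)) / 2 := by
  unfold minmod3
  split_ifs with h1 h2
  · obtain ⟨ha1, hb1, hc1⟩ := h1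
    have hle : min (2*(y-m)) (min ((y-x)/2) (2*(m-x))) ≤ 2*(m-x) :=
      (min_le_right _ _).trans (min_le_right _ _)
    have hpos : 0 < min (2*(y-m)) (min ((y-x)/2) (2*(m-x))) := lt_min ha1 (lt_min hb1 hc1)
    constructor <;> linarith
  · obtain ⟨ha1, hb1, hc1⟩ := h2
    have hge : 2*(y-m) ≤ max (2*(y-m)) (max ((y-x)/2) (2*(m-x))) := le_max_left _ _
    have hneg : max (2*(y-m)) (max ((y-x)/2) (2*(m-x))) < 0 := max_lt ha1 (max_lt hb1 hc1)
    constructor <;> linarith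
  · constructor <;> linarith

lemma sigmaX_bounds (f : ℤ → ℤ → ℝ) (hf : ∀ i j, 0 ≤ f i j) (i j : ℤ) :
    0 ≤ f i j + sigmaX f i j / 2 ∧ 0 ≤ f i j - sigmaX f i j / 2 := by
  unfold sigmaX
  exact slope_lower (f (i - 1) j) (f i j) (f (i + 1) j) (hf _ _) (hf _ _) (hf _ _)

lemma sigmaY_bounds (f : ℤ → ℤ → ℝ) (hf : ∀ i j, 0 ≤ f i j) (i j : ℤ) :
    0 ≤ f i j + sigmaY f i j / 2 ∧ 0 ≤ f i j - sigmaY f i j / 2 := by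
  unfold sigmaY
  exact slope_lower (f i (j - 1)) (f i j) (f i (j + 1)) (hf _ _) (hf _ _) (hf _ _)

lemma adv_core (θ2 lam a fc fplus fminus fpL fmR up1 um1 up0 um0 : ℝ)
    (hlam : 0 ≤ lam) (hfc : 0 ≤ fc)
    (hsum : fplus + fminus = 2 * fc)
    (hfp : 0 ≤ fplus) (hfm : 0 ≤ fminus) (hpL : 0 ≤ fpL) (hmR : 0 ≤ fmR)
    (hup1a : up1 ≤ a / 2)
    (hum1 : um1 ≤ 0)
    (hup0 : 0 ≤ up0)
    (hum0a : -(a / 2) ≤ um0)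
    (hcfl : lam * a ≤ θ2) :
    0 ≤ θ2 * fc - lam * ((up1 * fplus + um1 * fmR) - (up0 * fpL + um0 * fminus)) := by
  have hE : lam * a * (fplus + fminus) = lam * a * (2 * fc) := by rw [hsum]
  nlinarith [mul_nonneg hlam (mul_nonneg hup0 hpL),
    mul_nonneg hlam (mul_nonneg (neg_nonneg.2 hum1) hmR),
    mul_nonneg hlam (mul_nonneg (by linarith : (0:ℝ) ≤ a / 2 - up1) hfp),
    mul_nonneg hlam (mul_nonneg (by linarith : (0:ℝ) ≤ a / 2 + um0) hfm),
    mul_nonneg (by linarith : (0:ℝ) ≤ θ2 - lam * a) hfc, hE]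

lemma diff_core (e fc fE fW fN fS D0 DE DW DN DS c d rx ry : ℝ)
    (hfc : 0 ≤ fc) (hfE : 0 ≤ fE) (hfW : 0 ≤ fW) (hfN : 0 ≤ fN) (hfS : 0 ≤ fS)
    (hD0 : 0 ≤ D0) (hDE : 0 ≤ DE) (hDW : 0 ≤ DW) (hDN : 0 ≤ DN) (hDS : 0 ≤ DS)
    (hrx : 0 ≤ rx) (hry : 0 ≤ ry)
    (hcS : DE + 2 * D0 + DW ≤ c) (hdS : DN + 2 * D0 + DS ≤ d)
    (hcfl : rx * c + ry * d ≤ e) :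
    0 ≤ e * fc + rx * ((DE + D0) * (fE - fc) - (D0 + DW) * (fc - fW))
        + ry * ((DN + D0) * (fN - fc) - (D0 + DS) * (fc - fS)) := by
  nlinarith [mul_nonneg hrx (mul_nonneg (add_nonneg hDE hD0) hfE),
    mul_nonneg hrx (mul_nonneg (add_nonneg hD0 hDW) hfW),
    mul_nonneg hry (mul_nonneg (add_nonneg hDN hD0) hfN),
    mul_nonneg hry (mul_nonneg (add_nonneg hD0 hDS) hfS),
    mul_nonneg (mul_nonneg hrx (by linarith : (0:ℝ) ≤ c - (DE + 2 * D0 + DW))) hfc,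
    mul_nonneg (mul_nonneg hry (by linarith : (0:ℝ) ≤ d - (DN + 2 * D0 + DS))) hfc,
    mul_nonneg (by linarith : (0:ℝ) ≤ e - (rx * c + ry * d)) hfc]

/-- One forward-Euler step of the upwind-with-minmod advection-diffusion
scheme preserves nonnegativity of the cell averages under the CFL-like condition
`Δt · max(2a/(θΔx), 2b/(θΔy), (1/(2(1−θ)))(c/Δx² + d/Δy²)) ≤ 1` for some `θ ∈ (0,1)`,
where `a,b` bound `|u_{i+1,j}+u_{i,j}|`, `|z_{i,j+1}+z_{i,j}|` and `c,d` bound the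
diffusion stencil sums. -/
theorem euler_step_preserves_nonnegativity
    (f u z D : ℤ → ℤ → ℝ) (Δx Δy Δt a b c d θ : ℝ)
    (hΔx : 0 < Δx) (hΔy : 0 < Δy) (hΔt : 0 < Δt)
    (hf : ∀ i j, 0 ≤ f i j) (hD : ∀ i j, 0 ≤ D i j)
    (ha : ∀ i j, |u (i + 1) j + u i j| ≤ a)
    (hb : ∀ i j, |z i (j + 1) + z i j| ≤ b)
    (hc : ∀ i j, D (i + 1) j + 2 * D i j + D (i - 1) j ≤ c)
    (hd : ∀ i j, D i (j + 1) + 2 * D i j + D i (j - 1) ≤ d)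
    (hθ : θ ∈ Set.Ioo (0 : ℝ) 1)
    (hCFL : Δt * max (2 * a / (θ * Δx))
        (max (2 * b / (θ * Δy))
          (1 / (2 * (1 - θ)) * (c / Δx ^ 2 + d / Δy ^ 2))) ≤ 1) :
    ∀ i j, 0 ≤ eulerStep f u z D Δx Δy Δt i j := by
  obtain ⟨hθ0, hθ1⟩ := hθ
  have ha0 : 0 ≤ a := (abs_nonneg _).trans (ha 0 0)
  have hb0 : 0 ≤ b := (abs_nonneg _).trans (hb 0 0)
  -- CFL consequences
  have hA : Δt * (2 * a / (θ * Δx)) ≤ 1 :=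
    (mul_le_mul_of_nonneg_left (le_max_left _ _) hΔt.le).trans hCFL
  have hB : Δt * (2 * b / (θ * Δy)) ≤ 1 :=
    (mul_le_mul_of_nonneg_left ((le_max_left _ _).trans (le_max_right _ _)) hΔt.le).trans hCFL
  have hC : Δt * (1 / (2 * (1 - θ)) * (c / Δx ^ 2 + d / Δy ^ 2)) ≤ 1 :=
    (mul_le_mul_of_nonneg_left ((le_max_right _ _).trans (le_max_right _ _)) hΔt.le).trans hCFL
  have hax : Δt / Δx * a ≤ θ / 2 := by
    have h2 : (0:ℝ) < θ * Δx := mul_pos hθ0 hΔx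
    have h3 : Δt * (2 * a) / (θ * Δx) ≤ 1 := by rw [mul_div_assoc]; exact hA
    have h4 := (div_le_one h2).mp h3
    rw [div_mul_eq_mul_div, div_le_iff₀ hΔx]
    nlinarith
  have hay : Δt / Δy * b ≤ θ / 2 := by
    have h2 : (0:ℝ) < θ * Δy := mul_pos hθ0 hΔy
    have h3 : Δt * (2 * b) / (θ * Δy) ≤ 1 := by rw [mul_div_assoc]; exact hB
    have h4 := (div_le_one h2).mp h3
    rw [div_mul_eq_mul_div, div_le_iff₀ hΔy]
    nlinarith
  have hdiffcfl : Δt / (2 * Δx ^ 2) * c + Δt / (2 * Δy ^ 2) * d ≤ 1 - θ := by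
    have h2 : (0:ℝ) < 2 * (1 - θ) := by linarith
    have h3 : Δt * (c / Δx ^ 2 + d / Δy ^ 2) / (2 * (1 - θ)) ≤ 1 := by
      rw [show Δt * (c / Δx ^ 2 + d / Δy ^ 2) / (2 * (1 - θ))
          = Δt * (1 / (2 * (1 - θ)) * (c / Δx ^ 2 + d / Δy ^ 2)) from by ring]
      exact hC
    have h4 := (div_le_one h2).mp h3
    have h5 : Δt * (c / Δx ^ 2 + d / Δy ^ 2)
        = 2 * (Δt / (2 * Δx ^ 2) * c + Δt / (2 * Δy ^ 2) * d) := by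
      field_simp
    rw [h5] at h4
    linarith
  intro i j
  have hii : i - 1 + 1 = i := by ring
  have hjj : j - 1 + 1 = j := by ring
  -- velocity bounds
  have habs1 : |(u i j + u (i + 1) j) / 2| ≤ a / 2 := by
    have h := abs_le.mp (ha i j)
    exact abs_le.mpr ⟨by linarith [h.1], by linarith [h.2]⟩
  have habs0 : |(u (i - 1) j + u i j) / 2| ≤ a / 2 := by
    have h := ha (i - 1) j
    rw [hii] at h
    have h' := abs_le.mp h
    exact abs_le.mpr ⟨by linarith [h'.1], by linarith [h'.2]⟩
  have hzb1 : |(z i j + z i (j + 1)) / 2| ≤ b / 2 := by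
    have h := abs_le.mp (hb i j)
    exact abs_le.mpr ⟨by linarith [h.1], by linarith [h.2]⟩
  have hzb0 : |(z i (j - 1) + z i j) / 2| ≤ b / 2 := by
    have h := hb i (j - 1)
    rw [hjj] at h
    have h' := abs_le.mp h
    exact abs_le.mpr ⟨by linarith [h'.1], by linarith [h'.2]⟩
  -- x-advection
  have hx : 0 ≤ θ / 2 * f i j - Δt / Δx * (fluxF f u i j - fluxF f u (i - 1) j) := by
    unfold fluxF
    rw [hii]
    exact adv_core (θ / 2) (Δt / Δx) a (f i j)
      (f i j + sigmaX f i j / 2) (f i j - sigmaX f i j / 2)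
      (f (i - 1) j + sigmaX f (i - 1) j / 2) (f (i + 1) j - sigmaX f (i + 1) j / 2)
      (max 0 ((u i j + u (i + 1) j) / 2)) (min 0 ((u i j + u (i + 1) j) / 2))
      (max 0 ((u (i - 1) j + u i j) / 2)) (min 0 ((u (i - 1) j + u i j) / 2))
      (by positivity) (hf i j) (by ring)
      (sigmaX_bounds f hf i j).1 (sigmaX_bounds f hf i j).2
      (sigmaX_bounds f hf (i - 1) j).1 (sigmaX_bounds f hf (i + 1) j).2
      (max_le (by linarith) ((le_abs_self _).trans habs1))
      (min_le_left _ _)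
      (le_max_left _ _)
      (le_min (by linarith) (abs_le.mp habs0).1)
      hax
  -- y-advection
  have hy : 0 ≤ θ / 2 * f i j - Δt / Δy * (fluxG f z i j - fluxG f z i (j - 1)) := by
    unfold fluxG
    rw [hjj]
    exact adv_core (θ / 2) (Δt / Δy) b (f i j)
      (f i j + sigmaY f i j / 2) (f i j - sigmaY f i j / 2)
      (f i (j - 1) + sigmaY f i (j - 1) / 2) (f i (j + 1) - sigmaY f i (j + 1) / 2)
      (max 0 ((z i j + z i (j + 1)) / 2)) (min 0 ((z i j + z i (j + 1)) / 2))
      (max 0 ((z i (j - 1) + z i j) / 2)) (min 0 ((z i (j - 1) + z i j) / 2))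
      (by positivity) (hf i j) (by ring)
      (sigmaY_bounds f hf i j).1 (sigmaY_bounds f hf i j).2
      (sigmaY_bounds f hf i (j - 1)).1 (sigmaY_bounds f hf i (j + 1)).2
      (max_le (by linarith) ((le_abs_self _).trans hzb1))
      (min_le_left _ _)
      (le_max_left _ _)
      (le_min (by linarith) (abs_le.mp hzb0).1)
      hay
  -- diffusion
  have hdiff : 0 ≤ (1 - θ) * f i j
      + Δt / Δx * (fluxH f D Δx i j - fluxH f D Δx (i - 1) j)
      + Δt / Δy * (fluxM f D Δy i j - fluxM f D Δy i (j - 1)) := by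
    have key := diff_core (1 - θ) (f i j) (f (i + 1) j) (f (i - 1) j) (f i (j + 1))
      (f i (j - 1)) (D i j) (D (i + 1) j) (D (i - 1) j) (D i (j + 1)) (D i (j - 1))
      c d (Δt / (2 * Δx ^ 2)) (Δt / (2 * Δy ^ 2))
      (hf _ _) (hf _ _) (hf _ _) (hf _ _) (hf _ _)
      (hD _ _) (hD _ _) (hD _ _) (hD _ _) (hD _ _)
      (by positivity) (by positivity) (hc i j) (hd i j) hdiffcfl
    have hEq : (1 - θ) * f i j
        + Δt / Δx * (fluxH f D Δx i j - fluxH f D Δx (i - 1) j)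
        + Δt / Δy * (fluxM f D Δy i j - fluxM f D Δy i (j - 1))
        = (1 - θ) * f i j
          + Δt / (2 * Δx ^ 2) * ((D (i + 1) j + D i j) * (f (i + 1) j - f i j)
              - (D i j + D (i - 1) j) * (f i j - f (i - 1) j))
          + Δt / (2 * Δy ^ 2) * ((D i (j + 1) + D i j) * (f i (j + 1) - f i j)
              - (D i j + D i (j - 1)) * (f i j - f i (j - 1))) := by
      unfold fluxH fluxM
      rw [hii, hjj]
      field_simp
    rw [hEq]
    exact key
  have hsplit : eulerStep f u z D Δx Δy Δt i j
      = (θ / 2 * f i j - Δt / Δx * (fluxF f u i j - fluxF f u (i - 1) j))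
        + (θ / 2 * f i j - Δt / Δy * (fluxG f z i j - fluxG f z i (j - 1)))
        + ((1 - θ) * f i j
          + Δt / Δx * (fluxH f D Δx i j - fluxH f D Δx (i - 1) j)
          + Δt / Δy * (fluxM f D Δy i j - fluxM f D Δy i (j - 1))) := by
    unfold eulerStep
    ring
  rw [hsplit]
  exact add_nonneg (add_nonneg hx hy) hdiff
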